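/- For symmetric positive definite k×k matrices Σ_a, Σ_b and t ∈ [0,1], let Σ̃_t = Σ_a^{1/2}(Σ_a^{-1/2} Σ_b Σ_a^{-1/2})^t Σ_a^{1/2} be the geodesic path and Σ*_t = ((1-t)Σ_a^{-1} + tΣ_b^{-1})^{-1} the harmonic path. Then λ_1(Σ*_t) ≤ λ_1(Σ̃_t) ≤ max(λ_1(Σ_a), λ_1(Σ_b)), where λ_1 denotes the largest eigenvalue. -/

import Mathlib

open MeasureTheory Matrix

/-- Largest "eigenvalue" via the Rayleigh quotient (equals the largest eigenvalue
for symmetric matrices). -/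
noncomputable def lamMax {k : ℕ} (A : Matrix (Fin k) (Fin k) ℝ) : ℝ :=
  ⨆ u : {u : Fin k → ℝ // u ⬝ᵥ u = 1}, u.1 ⬝ᵥ A *ᵥ u.1

/-- Smallest "eigenvalue" via the Rayleigh quotient. -/
noncomputable def lamMin {k : ℕ} (A : Matrix (Fin k) (Fin k) ℝ) : ℝ :=
  ⨅ u : {u : Fin k → ℝ // u ⬝ᵥ u = 1}, u.1 ⬝ᵥ A *ᵥ u.1

/-- The scatter halfspace depth of a scatter matrix `Sg` w.r.t. the probability
measure `P`, with location `T`. -/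
noncomputable def HD {k : ℕ} (P : Measure (Fin k → ℝ)) (T : Fin k → ℝ)
    (Sg : Matrix (Fin k) (Fin k) ℝ) : ℝ :=
  ⨅ u : {u : Fin k → ℝ // u ⬝ᵥ u = 1},
    min (P {x | |u.1 ⬝ᵥ (x - T)| ≤ Real.sqrt (u.1 ⬝ᵥ Sg *ᵥ u.1)}).toReal
        (P {x | Real.sqrt (u.1 ⬝ᵥ Sg *ᵥ u.1) ≤ |u.1 ⬝ᵥ (x - T)|}).toReal

/-- Matrix square root via the continuous functional calculus. -/
noncomputable def msqrt {k : ℕ} (A : Matrix (Fin k) (Fin k) ℝ) : Matrix (Fin k) (Fin k) ℝ :=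
  cfc Real.sqrt A

/-- Matrix logarithm via the continuous functional calculus. -/
noncomputable def mlog {k : ℕ} (A : Matrix (Fin k) (Fin k) ℝ) : Matrix (Fin k) (Fin k) ℝ :=
  cfc Real.log A

/-- Matrix real power via the continuous functional calculus. -/
noncomputable def mpow {k : ℕ} (A : Matrix (Fin k) (Fin k) ℝ) (t : ℝ) :
    Matrix (Fin k) (Fin k) ℝ :=
  cfc (fun x : ℝ => x ^ t) A

/-- The geodesic path from `A` to `B` in the space of positive definite matrices. -/
noncomputable def geoPath {k : ℕ} (A B : Matrix (Fin k) (Fin k) ℝ) (t : ℝ) :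
    Matrix (Fin k) (Fin k) ℝ :=
  msqrt A * mpow ((msqrt A)⁻¹ * B * (msqrt A)⁻¹) t * msqrt A

/-- The harmonic path from `A` to `B`. -/
noncomputable def harmPath {k : ℕ} (A B : Matrix (Fin k) (Fin k) ℝ) (t : ℝ) :
    Matrix (Fin k) (Fin k) ℝ :=
  ((1 - t) • A⁻¹ + t • B⁻¹)⁻¹

/-- Frobenius norm of a matrix. -/
noncomputable def frob {k : ℕ} (A : Matrix (Fin k) (Fin k) ℝ) : ℝ :=
  Real.sqrt (∑ i, ∑ j, (A i j) ^ 2)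

/-- Geodesic distance on the space of positive definite matrices. -/
noncomputable def dg {k : ℕ} (A B : Matrix (Fin k) (Fin k) ℝ) : ℝ :=
  frob (mlog ((msqrt A)⁻¹ * B * (msqrt A)⁻¹))

/-- Sign vectors in `{-1,1}^k`. -/
def SignVec (k : ℕ) := {s : Fin k → ℝ // ∀ i, s i = 1 ∨ s i = -1}

section AuxHG
open Matrix
variable {k : ℕ}

lemma hcfc_mul {A : Matrix (Fin k) (Fin k) ℝ} (hA : A.IsHermitian) (f g : ℝ → ℝ) :
    hA.cfc f * hA.cfc g = hA.cfc (fun x => f x * g x) := by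
  unfold Matrix.IsHermitian.cfc
  simp only [Unitary.conjStarAlgAut_apply]
  have h1 : (star (hA.eigenvectorUnitary : Matrix (Fin k) (Fin k) ℝ)) *
      (hA.eigenvectorUnitary : Matrix (Fin k) (Fin k) ℝ) = 1 :=
    Unitary.star_mul_self_of_mem (SetLike.coe_mem _)
  have : ∀ (a b c d e f : Matrix (Fin k) (Fin k) ℝ), (a * b * c) * (d * e * f) = a * (b * (c * d) * e) * f := by
    intros; simp only [mul_assoc]
  rw [this, h1, mul_one, diagonal_mul_diagonal]
  congr 1

lemma hcfc_id {A : Matrix (Fin k) (Fin k) ℝ} (hA : A.IsHermitian) :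
    hA.cfc (fun x => x) = A := by
  conv_rhs => rw [hA.spectral_theorem]
  rfl

lemma hcfc_one {A : Matrix (Fin k) (Fin k) ℝ} (hA : A.IsHermitian) :
    hA.cfc (fun _ => 1) = 1 := by
  unfold Matrix.IsHermitian.cfc
  simp only [Unitary.conjStarAlgAut_apply]
  have : (RCLike.ofReal ∘ (fun _ : ℝ => (1:ℝ)) ∘ hA.eigenvalues) = fun _ => (1:ℝ) := by
    ext i; simp
  rw [this, diagonal_one, mul_one]
  exact Unitary.mul_star_self_of_mem (SetLike.coe_mem _)

lemma hcfc_congr {A : Matrix (Fin k) (Fin k) ℝ} (hA : A.IsHermitian) {f g : ℝ → ℝ}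
    (h : ∀ i, f (hA.eigenvalues i) = g (hA.eigenvalues i)) : hA.cfc f = hA.cfc g := by
  unfold Matrix.IsHermitian.cfc
  have : (RCLike.ofReal ∘ f ∘ hA.eigenvalues : Fin k → ℝ) = RCLike.ofReal ∘ g ∘ hA.eigenvalues :=
    funext fun i => by simp [h i]
  rw [this]

lemma hcfc_herm {A : Matrix (Fin k) (Fin k) ℝ} (hA : A.IsHermitian) (f : ℝ → ℝ) :
    (hA.cfc f).IsHermitian := by
  unfold Matrix.IsHermitian.cfc
  simp only [Unitary.conjStarAlgAut_apply]
  rw [star_eq_conjTranspose]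
  exact isHermitian_mul_mul_conjTranspose _ (isHermitian_diagonal _)

lemma hcfc_add {A : Matrix (Fin k) (Fin k) ℝ} (hA : A.IsHermitian) (f g : ℝ → ℝ) :
    hA.cfc f + hA.cfc g = hA.cfc (fun x => f x + g x) := by
  unfold Matrix.IsHermitian.cfc
  simp only [Unitary.conjStarAlgAut_apply]
  rw [← add_mul, ← mul_add, diagonal_add]
  have : (fun i => (RCLike.ofReal ∘ f ∘ hA.eigenvalues) i + (RCLike.ofReal ∘ g ∘ hA.eigenvalues) i : Fin k → ℝ)
      = RCLike.ofReal ∘ (fun x => f x + g x) ∘ hA.eigenvalues := funext fun i => by simp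
  rw [this]

lemma hcfc_sub {A : Matrix (Fin k) (Fin k) ℝ} (hA : A.IsHermitian) (f g : ℝ → ℝ) :
    hA.cfc f - hA.cfc g = hA.cfc (fun x => f x - g x) := by
  unfold Matrix.IsHermitian.cfc
  simp only [Unitary.conjStarAlgAut_apply]
  rw [← sub_mul, ← mul_sub, diagonal_sub]
  have : (fun i => (RCLike.ofReal ∘ f ∘ hA.eigenvalues) i - (RCLike.ofReal ∘ g ∘ hA.eigenvalues) i : Fin k → ℝ)
      = RCLike.ofReal ∘ (fun x => f x - g x) ∘ hA.eigenvalues := funext fun i => by simp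
  rw [this]

lemma hcfc_smul {A : Matrix (Fin k) (Fin k) ℝ} (hA : A.IsHermitian) (c : ℝ) (f : ℝ → ℝ) :
    c • hA.cfc f = hA.cfc (fun x => c * f x) := by
  unfold Matrix.IsHermitian.cfc
  simp only [Unitary.conjStarAlgAut_apply]
  rw [← smul_mul_assoc, ← mul_smul_comm, ← diagonal_smul]
  have : (c • (RCLike.ofReal ∘ f ∘ hA.eigenvalues) : Fin k → ℝ)
      = RCLike.ofReal ∘ (fun x => c * f x) ∘ hA.eigenvalues := funext fun i => by simp
  rw [this]

lemma hcfc_posSemidef {A : Matrix (Fin k) (Fin k) ℝ} (hA : A.IsHermitian) {f : ℝ → ℝ}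
    (h : ∀ i, 0 ≤ f (hA.eigenvalues i)) : (hA.cfc f).PosSemidef := by
  unfold Matrix.IsHermitian.cfc
  simp only [Unitary.conjStarAlgAut_apply]
  rw [star_eq_conjTranspose]
  exact (Matrix.PosSemidef.diagonal (fun i => h i)).mul_mul_conjTranspose_same _

lemma quad_le_of_psd {X Y : Matrix (Fin k) (Fin k) ℝ} (h : (Y - X).PosSemidef)
    (u : Fin k → ℝ) : u ⬝ᵥ X *ᵥ u ≤ u ⬝ᵥ Y *ᵥ u := by
  have := h.dotProduct_mulVec_nonneg u
  simp only [star_trivial, sub_mulVec, dotProduct_sub] at this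
  linarith

lemma posDef_conj {P N : Matrix (Fin k) (Fin k) ℝ} (hP : P.PosDef) (hN : IsUnit N) :
    (N * P * Nᴴ).PosDef := by
  refine Matrix.PosDef.of_dotProduct_mulVec_pos (isHermitian_mul_mul_conjTranspose _ hP.1) fun x hx => ?_
  have hx' : Nᴴ *ᵥ x ≠ 0 := by
    have hinj : Function.Injective (Nᴴ *ᵥ ·) := by
      rw [Matrix.mulVec_injective_iff_isUnit]
      exact (Matrix.isUnit_conjTranspose N).mpr hN
    intro hc
    exact hx (by simpa using hinj (hc.trans (Matrix.mulVec_zero _).symm))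
  have := hP.dotProduct_mulVec_pos hx'
  have hrw : star x ⬝ᵥ (N * P * Nᴴ) *ᵥ x = star (Nᴴ *ᵥ x) ⬝ᵥ P *ᵥ (Nᴴ *ᵥ x) := by
    rw [star_mulVec, conjTranspose_conjTranspose, ← mulVec_mulVec, ← mulVec_mulVec,
      dotProduct_mulVec (star x)]
  rwa [hrw]

lemma eig_ge_one {C : Matrix (Fin k) (Fin k) ℝ} (hC : C.IsHermitian)
    (h : (C - 1).PosSemidef) (i : Fin k) : 1 ≤ hC.eigenvalues i := by
  set v : Fin k → ℝ := ⇑(hC.eigenvectorBasis i) with hv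
  have hv0 : v ≠ 0 := by
    have := hC.eigenvectorBasis.orthonormal.ne_zero i
    intro hc
    apply this
    ext j
    exact congrFun hc j
  have hvv : 0 < v ⬝ᵥ v := by
    have := dotProduct_star_self_pos_iff (v := v).mpr hv0
    simpa using this
  have hev : C *ᵥ v = hC.eigenvalues i • v := hC.mulVec_eigenvectorBasis i
  have hq := h.dotProduct_mulVec_nonneg v
  simp only [star_trivial, sub_mulVec, dotProduct_sub, one_mulVec, hev, dotProduct_smul,
    smul_eq_mul] at hq
  nlinarith

lemma scalar_amgm {x t : ℝ} (hx : 0 < x) (ht0 : 0 ≤ t) (ht1 : t ≤ 1) :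
    x ^ t ≤ (1 - t) + t * x := by
  have h := Real.geom_mean_le_arith_mean2_weighted (sub_nonneg.2 ht1) ht0 zero_le_one hx.le
    (by ring)
  simpa using h

lemma unit_nonempty [NeZero k] : Nonempty {u : Fin k → ℝ // u ⬝ᵥ u = 1} :=
  ⟨⟨Pi.single (0 : Fin k) 1, by rw [single_dotProduct]; simp⟩⟩

lemma quad_bdd (A : Matrix (Fin k) (Fin k) ℝ) :
    BddAbove (Set.range fun u : {u : Fin k → ℝ // u ⬝ᵥ u = 1} => u.1 ⬝ᵥ A *ᵥ u.1) := by
  refine ⟨∑ i, ∑ j, |A i j|, ?_⟩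
  rintro x ⟨u, rfl⟩
  have habs : ∀ i, |u.1 i| ≤ 1 := by
    intro i
    have h1 : u.1 i ^ 2 ≤ 1 := by
      calc u.1 i ^ 2 ≤ ∑ j, u.1 j ^ 2 :=
            Finset.single_le_sum (f := fun j => u.1 j ^ 2) (fun j _ => sq_nonneg _)
              (Finset.mem_univ i)
        _ = u.1 ⬝ᵥ u.1 := by simp [dotProduct, sq]
        _ = 1 := u.2
    nlinarith [abs_nonneg (u.1 i), sq_abs (u.1 i)]
  calc u.1 ⬝ᵥ A *ᵥ u.1 ≤ |u.1 ⬝ᵥ A *ᵥ u.1| := le_abs_self _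
    _ ≤ ∑ i, |u.1 i * (A *ᵥ u.1) i| := Finset.abs_sum_le_sum_abs _ _
    _ ≤ ∑ i, ∑ j, |A i j| := by
        refine Finset.sum_le_sum fun i _ => ?_
        rw [abs_mul]
        calc |u.1 i| * |(A *ᵥ u.1) i| ≤ 1 * |(A *ᵥ u.1) i| :=
              mul_le_mul_of_nonneg_right (habs i) (abs_nonneg _)
          _ = |∑ j, A i j * u.1 j| := by rw [one_mul]; rfl
          _ ≤ ∑ j, |A i j * u.1 j| := Finset.abs_sum_le_sum_abs _ _
          _ ≤ ∑ j, |A i j| := Finset.sum_le_sum fun j _ => by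
              rw [abs_mul]
              nlinarith [abs_nonneg (A i j), habs j, abs_nonneg (u.1 j)]

lemma quad_le_lamMax [NeZero k] (A : Matrix (Fin k) (Fin k) ℝ)
    (u : {u : Fin k → ℝ // u ⬝ᵥ u = 1}) : u.1 ⬝ᵥ A *ᵥ u.1 ≤ lamMax A :=
  le_ciSup (quad_bdd A) u

lemma lamMax_mono [NeZero k] {X Y : Matrix (Fin k) (Fin k) ℝ} (h : (Y - X).PosSemidef) :
    lamMax X ≤ lamMax Y := by
  haveI := unit_nonempty (k := k)
  exact ciSup_mono (quad_bdd Y) fun u => quad_le_of_psd h u.1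

lemma lamMax_combo [NeZero k] {A B : Matrix (Fin k) (Fin k) ℝ} {t : ℝ}
    (ht0 : 0 ≤ t) (ht1 : t ≤ 1) :
    lamMax ((1 - t) • A + t • B) ≤ max (lamMax A) (lamMax B) := by
  haveI := unit_nonempty (k := k)
  refine ciSup_le fun u => ?_
  have hA := quad_le_lamMax A u
  have hB := quad_le_lamMax B u
  have hAm : lamMax A ≤ max (lamMax A) (lamMax B) := le_max_left _ _
  have hBm : lamMax B ≤ max (lamMax A) (lamMax B) := le_max_right _ _
  have hq : u.1 ⬝ᵥ ((1 - t) • A + t • B) *ᵥ u.1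
      = (1 - t) * (u.1 ⬝ᵥ A *ᵥ u.1) + t * (u.1 ⬝ᵥ B *ᵥ u.1) := by
    simp [Matrix.add_mulVec, Matrix.smul_mulVec, dotProduct_add, dotProduct_smul,
      smul_eq_mul]
  rw [hq]
  nlinarith

lemma inv_sub_inv_psd {X Y : Matrix (Fin k) (Fin k) ℝ} (hX : X.PosDef) (hY : Y.IsHermitian)
    (hXY : (Y - X).PosSemidef) : (X⁻¹ - Y⁻¹).PosSemidef := by
  have hYpd : Y.PosDef := by
    have := hX.add_posSemidef hXY
    simpa using this
  have h := hX.1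
  have heig : ∀ i, 0 < h.eigenvalues i := hX.eigenvalues_pos
  set R : Matrix (Fin k) (Fin k) ℝ := h.cfc (fun x => (Real.sqrt x)⁻¹) with hRdef
  set Rinv : Matrix (Fin k) (Fin k) ℝ := h.cfc Real.sqrt with hRinvdef
  have hR : R.IsHermitian := hcfc_herm _ _
  have hsne : ∀ i, Real.sqrt (h.eigenvalues i) ≠ 0 :=
    fun i => (Real.sqrt_pos.mpr (heig i)).ne'
  have hRRinv : R * Rinv = 1 := by
    rw [hRdef, hRinvdef, hcfc_mul,
      hcfc_congr h (g := fun _ => 1) (fun i => inv_mul_cancel₀ (hsne i)), hcfc_one]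
  have hRinvR : Rinv * R = 1 := by
    rw [hRdef, hRinvdef, hcfc_mul,
      hcfc_congr h (g := fun _ => 1) (fun i => mul_inv_cancel₀ (hsne i)), hcfc_one]
  have hRunit : IsUnit R := ⟨⟨R, Rinv, hRRinv, hRinvR⟩, rfl⟩
  have hRX : R * X * R = 1 := by
    conv_lhs => rw [← hcfc_id h]
    rw [hRdef, hcfc_mul, hcfc_mul,
      hcfc_congr h (g := fun _ => 1) (fun i => ?_), hcfc_one]
    rw [← Real.mul_self_sqrt (heig i).le]
    field_simp
    try rw [div_self (hsne i)]
    try rw [div_self (mul_ne_zero (hsne i) (hsne i))]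
    rw [Real.sqrt_sq (Real.sqrt_nonneg _), div_self (pow_ne_zero 2 (hsne i))]
  set C : Matrix (Fin k) (Fin k) ℝ := R * Y * R with hCdef
  have hC : C.PosDef := by
    have := posDef_conj hYpd hRunit
    rwa [hR.eq] at this
  have hC1 : (C - 1).PosSemidef := by
    have heq : R * (Y - X) * R = C - 1 := by
      rw [Matrix.mul_sub, Matrix.sub_mul, hRX, hCdef]
    have := hXY.mul_mul_conjTranspose_same R
    rwa [hR.eq, heq] at this
  have heigC : ∀ i, 1 ≤ hC.1.eigenvalues i := eig_ge_one hC.1 hC1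
  have heigCne : ∀ i, hC.1.eigenvalues i ≠ 0 := fun i => by nlinarith [heigC i]
  set Cinv : Matrix (Fin k) (Fin k) ℝ := hC.1.cfc (fun x => x⁻¹) with hCinvdef
  have hCCinv : C * Cinv = 1 := by
    conv_lhs => rw [← hcfc_id hC.1]
    rw [hCinvdef, hcfc_mul,
      hcfc_congr hC.1 (g := fun _ => 1) (fun i => mul_inv_cancel₀ (heigCne i)), hcfc_one]
  have cRiR : ∀ Z : Matrix (Fin k) (Fin k) ℝ, Rinv * (R * Z) = Z := fun Z => by
    rw [← mul_assoc, hRinvR, one_mul]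
  have cRRi : ∀ Z : Matrix (Fin k) (Fin k) ℝ, R * (Rinv * Z) = Z := fun Z => by
    rw [← mul_assoc, hRRinv, one_mul]
  have cCCi : ∀ Z : Matrix (Fin k) (Fin k) ℝ, C * (Cinv * Z) = Z := fun Z => by
    rw [← mul_assoc, hCCinv, one_mul]
  have hYeq : Y = Rinv * C * Rinv := by
    rw [hCdef]
    simp only [mul_assoc]
    rw [cRiR, hRRinv, mul_one]
  have hYinv : Y⁻¹ = R * Cinv * R := by
    refine Matrix.inv_eq_right_inv ?_
    rw [hYeq]
    simp only [mul_assoc]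
    rw [cRiR, cCCi, hRinvR]
  have hXRR : X * (R * R) = 1 := by
    conv_lhs => rw [← hcfc_id h]
    rw [hRdef, hcfc_mul, hcfc_mul,
      hcfc_congr h (g := fun _ => 1) (fun i => ?_), hcfc_one]
    rw [← Real.mul_self_sqrt (heig i).le]
    field_simp
    try rw [div_self (hsne i)]
    try rw [div_self (mul_ne_zero (hsne i) (hsne i))]
    rw [Real.sqrt_sq (Real.sqrt_nonneg _), div_self (pow_ne_zero 2 (hsne i))]
  have hXinv : X⁻¹ = R * R := Matrix.inv_eq_right_inv hXRR
  have hfin : R * (1 - Cinv) * R = X⁻¹ - Y⁻¹ := by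
    rw [Matrix.mul_sub, Matrix.sub_mul, mul_one, hXinv, hYinv]
  have hpsd1 : (1 - Cinv).PosSemidef := by
    have heq : hC.1.cfc (fun x => 1 - x⁻¹) = 1 - Cinv := by
      rw [hCinvdef, ← hcfc_sub, hcfc_one]
    rw [← heq]
    refine hcfc_posSemidef _ (fun i => ?_)
    have h1 := heigC i
    have h2 : hC.1.eigenvalues i ≠ 0 := heigCne i
    have : (hC.1.eigenvalues i)⁻¹ ≤ 1 := by
      rw [inv_le_one_iff₀]
      right; exact h1
    linarith
  have := hpsd1.mul_mul_conjTranspose_same R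
  rwa [hR.eq, hfin] at this

lemma hcfc_posDef {A : Matrix (Fin k) (Fin k) ℝ} (hA : A.IsHermitian) {f : ℝ → ℝ}
    (h : ∀ i, 0 < f (hA.eigenvalues i)) : (hA.cfc f).PosDef := by
  unfold Matrix.IsHermitian.cfc
  simp only [Unitary.conjStarAlgAut_apply]
  rw [star_eq_conjTranspose]
  refine posDef_conj ?_ ?_
  · refine Matrix.posDef_diagonal_iff.mpr (fun i => by simpa using h i)
  · exact ⟨⟨_, star (hA.eigenvectorUnitary : Matrix (Fin k) (Fin k) ℝ),
      Unitary.mul_star_self_of_mem (SetLike.coe_mem _),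
      Unitary.star_mul_self_of_mem (SetLike.coe_mem _)⟩, rfl⟩

end AuxHG

/-- along the geodesic and harmonic paths between positive definite
matrices, `λ₁(Σ*_t) ≤ λ₁(Σ̃_t) ≤ max(λ₁(Σ_a), λ₁(Σ_b))`. -/
theorem lamMax_geoPath_harmPath {k : ℕ} [NeZero k] (A B : Matrix (Fin k) (Fin k) ℝ)
    (hA : A.PosDef) (hB : B.PosDef) (t : ℝ) (ht : t ∈ Set.Icc (0 : ℝ) 1) :
    lamMax (harmPath A B t) ≤ lamMax (geoPath A B t) ∧
      lamMax (geoPath A B t) ≤ max (lamMax A) (lamMax B) := by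
  obtain ⟨ht0, ht1⟩ := ht
  have hAh := hA.1
  have heigA : ∀ i, 0 < hAh.eigenvalues i := hA.eigenvalues_pos
  set S := hAh.cfc Real.sqrt with hSdef
  set Sinv := hAh.cfc (fun x => (Real.sqrt x)⁻¹) with hSinvdef
  clear_value S Sinv
  have hsne : ∀ i, Real.sqrt (hAh.eigenvalues i) ≠ 0 :=
    fun i => (Real.sqrt_pos.mpr (heigA i)).ne'
  have hS : S.IsHermitian := by rw [hSdef]; exact hcfc_herm _ _
  have hSi : Sinv.IsHermitian := by rw [hSinvdef]; exact hcfc_herm _ _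
  have hmsqrt : msqrt A = S := by rw [hSdef]; exact hAh.cfc_eq _
  have hSSi : S * Sinv = 1 := by
    rw [hSdef, hSinvdef, hcfc_mul,
      hcfc_congr hAh (g := fun _ => 1) (fun i => mul_inv_cancel₀ (hsne i)), hcfc_one]
  have hSiS : Sinv * S = 1 := by
    rw [hSdef, hSinvdef, hcfc_mul,
      hcfc_congr hAh (g := fun _ => 1) (fun i => inv_mul_cancel₀ (hsne i)), hcfc_one]
  have hSinv_eq : (msqrt A)⁻¹ = Sinv := by
    rw [hmsqrt]; exact Matrix.inv_eq_right_inv hSSi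
  have hSS : S * S = A := by
    rw [hSdef, hcfc_mul,
      hcfc_congr hAh (g := fun x => x) (fun i => Real.mul_self_sqrt (heigA i).le), hcfc_id]
  have hSunit : IsUnit S := ⟨⟨S, Sinv, hSSi, hSiS⟩, rfl⟩
  have hSiunit : IsUnit Sinv := ⟨⟨Sinv, S, hSiS, hSSi⟩, rfl⟩
  have cSSi : ∀ Z : Matrix (Fin k) (Fin k) ℝ, S * (Sinv * Z) = Z := fun Z => by
    rw [← mul_assoc, hSSi, one_mul]
  have cSiS : ∀ Z : Matrix (Fin k) (Fin k) ℝ, Sinv * (S * Z) = Z := fun Z => by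
    rw [← mul_assoc, hSiS, one_mul]
  set M := Sinv * B * Sinv with hMdef
  clear_value M
  have hM : M.PosDef := by
    have := posDef_conj hB hSiunit
    rwa [hSi.eq, ← hMdef] at this
  have hMh := hM.1
  have heigM : ∀ i, 0 < hMh.eigenvalues i := hM.eigenvalues_pos
  set P := hMh.cfc (fun x => x ^ t) with hPdef
  clear_value P
  have hmpow : mpow M t = P := by rw [hPdef]; exact hMh.cfc_eq _
  have hG : geoPath A B t = S * P * S := by
    unfold geoPath
    rw [hSinv_eq, hmsqrt, ← hMdef, hmpow]
  have hSMS : S * M * S = B := by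
    rw [hMdef]
    simp only [mul_assoc]
    rw [cSSi, hSiS, mul_one]
  -- Part 2: geo ≤ (1-t)A + tB
  have key1 : ((1 - t) • (1 : Matrix (Fin k) (Fin k) ℝ) + t • M - P).PosSemidef := by
    have heq : (1 - t) • (1 : Matrix (Fin k) (Fin k) ℝ) + t • M - P
        = hMh.cfc (fun x => ((1 - t) * 1 + t * x) - x ^ t) := by
      have hsplit : hMh.cfc (fun x => ((1 - t) * 1 + t * x) - x ^ t)
          = (1 - t) • hMh.cfc (fun _ => 1) + t • hMh.cfc (fun x => x)
            - hMh.cfc (fun x => x ^ t) := by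
        rw [hcfc_smul, hcfc_smul, hcfc_add, hcfc_sub]
      rw [hsplit, hcfc_one, hcfc_id, ← hPdef]
    rw [heq]
    refine hcfc_posSemidef _ (fun i => ?_)
    have := scalar_amgm (heigM i) ht0 ht1
    simp only [mul_one]
    linarith
  have key1' : ((1 - t) • A + t • B - geoPath A B t).PosSemidef := by
    have hps := key1.mul_mul_conjTranspose_same S
    rw [hS.eq] at hps
    have heq : S * ((1 - t) • (1 : Matrix (Fin k) (Fin k) ℝ) + t • M - P) * S
        = (1 - t) • A + t • B - geoPath A B t := by
      rw [hG, Matrix.mul_sub, Matrix.sub_mul, Matrix.mul_add, Matrix.add_mul]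
      congr 2
      · rw [mul_smul_comm, smul_mul_assoc, mul_one, hSS]
      · rw [mul_smul_comm, smul_mul_assoc, hSMS]
    rwa [heq] at hps
  have part2 : lamMax (geoPath A B t) ≤ max (lamMax A) (lamMax B) :=
    (lamMax_mono key1').trans (lamMax_combo ht0 ht1)
  -- Part 1: harm ≤ geo
  have hrpne : ∀ i, (hMh.eigenvalues i) ^ t ≠ 0 :=
    fun i => (Real.rpow_pos_of_pos (heigM i) t).ne'
  set Pinv := hMh.cfc (fun x => (x ^ t)⁻¹) with hPinvdef
  clear_value Pinv
  have hPPi : P * Pinv = 1 := by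
    rw [hPdef, hPinvdef, hcfc_mul,
      hcfc_congr hMh (g := fun _ => 1) (fun i => mul_inv_cancel₀ (hrpne i)), hcfc_one]
  have cPPi : ∀ Z : Matrix (Fin k) (Fin k) ℝ, P * (Pinv * Z) = Z := fun Z => by
    rw [← mul_assoc, hPPi, one_mul]
  have hGinv : (geoPath A B t)⁻¹ = Sinv * Pinv * Sinv := by
    refine Matrix.inv_eq_right_inv ?_
    rw [hG]
    simp only [mul_assoc]
    rw [cSSi, cPPi, hSSi]
  set Minv := hMh.cfc (fun x => x⁻¹) with hMinvdef
  clear_value Minv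
  have hMMi : M * Minv = 1 := by
    conv_lhs => rw [← hcfc_id hMh]
    rw [hMinvdef, hcfc_mul,
      hcfc_congr hMh (g := fun _ => 1) (fun i => mul_inv_cancel₀ (heigM i).ne'), hcfc_one]
  have cMMi : ∀ Z : Matrix (Fin k) (Fin k) ℝ, M * (Minv * Z) = Z := fun Z => by
    rw [← mul_assoc, hMMi, one_mul]
  have hBinv : B⁻¹ = Sinv * Minv * Sinv := by
    refine Matrix.inv_eq_right_inv ?_
    rw [← hSMS]
    simp only [mul_assoc]
    rw [cSSi, cMMi, hSSi]
  have hAinv : A⁻¹ = Sinv * Sinv := by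
    refine Matrix.inv_eq_right_inv ?_
    rw [← hSS]
    simp only [mul_assoc]
    rw [cSSi, hSSi]
  have keyc : ((1 - t) • (1 : Matrix (Fin k) (Fin k) ℝ) + t • Minv - Pinv).PosSemidef := by
    have heq : (1 - t) • (1 : Matrix (Fin k) (Fin k) ℝ) + t • Minv - Pinv
        = hMh.cfc (fun x => ((1 - t) * 1 + t * x⁻¹) - (x ^ t)⁻¹) := by
      have hsplit : hMh.cfc (fun x => ((1 - t) * 1 + t * x⁻¹) - (x ^ t)⁻¹)
          = (1 - t) • hMh.cfc (fun _ => 1) + t • hMh.cfc (fun x => x⁻¹)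
            - hMh.cfc (fun x => (x ^ t)⁻¹) := by
        rw [hcfc_smul, hcfc_smul, hcfc_add, hcfc_sub]
      rw [hsplit, hcfc_one, ← hMinvdef, ← hPinvdef]
    rw [heq]
    refine hcfc_posSemidef _ (fun i => ?_)
    have h1 := scalar_amgm (inv_pos.mpr (heigM i)) ht0 ht1
    rw [← Real.inv_rpow (heigM i).le]
    simp only [mul_one]
    linarith
  have key2 : (((1 - t) • A⁻¹ + t • B⁻¹) - (geoPath A B t)⁻¹).PosSemidef := by
    have hps := keyc.mul_mul_conjTranspose_same Sinv
    rw [hSi.eq] at hps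
    have heq : Sinv * ((1 - t) • (1 : Matrix (Fin k) (Fin k) ℝ) + t • Minv - Pinv) * Sinv
        = ((1 - t) • A⁻¹ + t • B⁻¹) - (geoPath A B t)⁻¹ := by
      rw [hGinv, Matrix.mul_sub, Matrix.sub_mul, Matrix.mul_add, Matrix.add_mul]
      congr 2
      · rw [mul_smul_comm, smul_mul_assoc, mul_one, hAinv]
      · rw [mul_smul_comm, smul_mul_assoc, hBinv]
    rwa [heq] at hps
  have hGpd : (geoPath A B t).PosDef := by
    rw [hG]
    have hPpd : P.PosDef := by
      rw [hPdef]; exact hcfc_posDef hMh (fun i => Real.rpow_pos_of_pos (heigM i) t)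
    have := posDef_conj hPpd hSunit
    rwa [hS.eq] at this
  have hsmulH : ∀ (c : ℝ) (X : Matrix (Fin k) (Fin k) ℝ), X.IsHermitian →
      (c • X).IsHermitian := fun c X hX => by
    show (c • X)ᴴ = c • X
    rw [Matrix.conjTranspose_smul, hX.eq, star_trivial]
  have hHherm : ((1 - t) • A⁻¹ + t • B⁻¹).IsHermitian :=
    (hsmulH _ _ hA.inv.1).add (hsmulH _ _ hB.inv.1)
  have final3 := inv_sub_inv_psd hGpd.inv hHherm key2
  rw [Matrix.nonsing_inv_nonsing_inv _ hGpd.det_pos.ne'.isUnit] at final3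
  refine ⟨lamMax_mono ?_, part2⟩
  unfold harmPath
  exact final3
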